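/- arXiv:1303.4193 — 2 statements merged into one kernel-verified Lean document; each statement's English description precedes it below -/
import Mathlib

section
/- Vickrey's theorem (dominance part): in a second-price auction, truthful bidding is a weakly dominant strategy. Formally, for each participant i and any bid vector b̂ ∈ ℝ_+^n with b̂_i ≠ v_i, letting b̂^{i←v} denote b̂ with its i-th component replaced by v_i, we have u_i(b̂^{i←v}) ≥ u_i(b̂), where outcomes in each case are determined by a second-price auction on the respective bid vectors. -/
open Finset

/-- The maximum bid among all `n` participants. -/
noncomputable def maxB {n : ℕ} (hn : 2 ≤ n) (b : Fin n → ℝ) : ℝ :=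
  (univ : Finset (Fin n)).sup' ⟨(⟨0, by omega⟩ : Fin n), mem_univ _⟩ b

/-- The maximum bid among participants other than `i`. -/
noncomputable def maxOthers {n : ℕ} (hn : 2 ≤ n) (b : Fin n → ℝ) (i : Fin n) : ℝ :=
  ((univ : Finset (Fin n)).erase i).sup'
    (by
      rw [← Finset.card_pos, Finset.card_erase_of_mem (mem_univ i), Finset.card_univ,
        Fintype.card_fin]
      omega) b

/-- `(x, p)` is a second-price auction outcome for bids `b`: a single winner `i`
with maximal bid gets the good (`x i = 1`) and pays the maximum of the other bids;
all other participants get nothing and pay nothing. -/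
def spa {n : ℕ} (hn : 2 ≤ n) (b x p : Fin n → ℝ) : Prop :=
  ∃ i : Fin n, b i = maxB hn b ∧ x i = 1 ∧ p i = maxOthers hn b i ∧
    ∀ j : Fin n, j ≠ i → x j = 0 ∧ p j = 0

/-- truthful bidding is weakly dominant. -/
theorem stmt_3 {n : ℕ} (hn : 2 ≤ n) (v : Fin n → ℝ) (hv : ∀ j, 0 ≤ v j)
    (i : Fin n) (bhat : Fin n → ℝ) (hbhat : ∀ j, 0 ≤ bhat j)
    (hne : bhat i ≠ v i)
    (x1 p1 x2 p2 : Fin n → ℝ)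
    (h1 : spa hn (Function.update bhat i (v i)) x1 p1)
    (h2 : spa hn bhat x2 p2) :
    v i * x2 i - p2 i ≤ v i * x1 i - p1 i := by
  obtain ⟨w1, hw1max, hx1, hp1, hrest1⟩ := h1
  obtain ⟨w2, hw2max, hx2, hp2, hrest2⟩ := h2
  set b1 := Function.update bhat i (v i) with hb1
  have hMeq : maxOthers hn b1 i = maxOthers hn bhat i := by
    apply Finset.sup'_congr _ rfl
    intro j hj
    exact Function.update_of_ne (Finset.ne_of_mem_erase hj) _ _
  have hMle : ∀ j, j ≠ i → bhat j ≤ maxOthers hn bhat i := fun j hj =>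
    Finset.le_sup' _ (Finset.mem_erase.mpr ⟨hj, mem_univ j⟩)
  have hmaxB : ∀ (b : Fin n → ℝ) (j : Fin n), b j ≤ maxB hn b := fun b j =>
    Finset.le_sup' _ (mem_univ j)
  by_cases h1i : w1 = i
  · rw [h1i] at hw1max hx1 hp1
    have hvle : maxOthers hn bhat i ≤ v i := by
      rw [← hMeq]
      apply Finset.sup'_le
      intro j hj
      calc b1 j ≤ maxB hn b1 := hmaxB b1 j
        _ = b1 i := hw1max.symm
        _ = v i := Function.update_self _ _ _
    rw [hx1, hp1, hMeq]
    by_cases h2i : w2 = i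
    · rw [h2i] at hx2 hp2
      rw [hx2, hp2]
    · obtain ⟨hx2', hp2'⟩ := hrest2 i (fun h => h2i h.symm)
      rw [hx2', hp2']
      simp
      linarith
  · obtain ⟨hx1', hp1'⟩ := hrest1 i (fun h => h1i h.symm)
    rw [hx1', hp1']
    by_cases h2i : w2 = i
    · rw [h2i] at hx2 hp2
      rw [hx2, hp2]
      have : v i ≤ maxOthers hn bhat i := by
        calc v i = b1 i := (Function.update_self i (v i) bhat).symm
          _ ≤ maxB hn b1 := hmaxB b1 i
          _ = b1 w1 := hw1max.symm
          _ = bhat w1 := Function.update_of_ne h1i _ _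
          _ ≤ maxOthers hn bhat i := hMle w1 h1i
      linarith
    · obtain ⟨hx2', hp2'⟩ := hrest2 i (fun h => h2i h.symm)
      rw [hx2', hp2']
end

section
/- Vickrey's theorem (full statement): in a second-price auction with n ≥ 2 bidders, the truthful strategy profile b = v supports an equilibrium in weakly dominant strategies, and the auction is efficient (the winner has the highest valuation). -/
open Finset

lemma le_maxB {n : ℕ} (hn : 2 ≤ n) (b : Fin n → ℝ) (i : Fin n) : b i ≤ maxB hn b :=
  le_sup' b (mem_univ i)

lemma le_maxOthers {n : ℕ} (hn : 2 ≤ n) (b : Fin n → ℝ) {i j : Fin n} (h : j ≠ i) :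
    b j ≤ maxOthers hn b i :=
  le_sup' b (mem_erase.2 ⟨h, mem_univ j⟩)

lemma maxOthers_le_maxB {n : ℕ} (hn : 2 ≤ n) (b : Fin n → ℝ) (i : Fin n) :
    maxOthers hn b i ≤ maxB hn b :=
  sup'_mono b (erase_subset i univ) _

lemma maxOthers_update {n : ℕ} (hn : 2 ≤ n) (b : Fin n → ℝ) (i : Fin n) (c : ℝ) :
    maxOthers hn (Function.update b i c) i = maxOthers hn b i := by
  apply sup'_congr _ rfl
  intro j hj
  exact Function.update_of_ne (mem_erase.1 hj).1 _ _

/-- Vickrey's theorem — truthful bidding is weakly dominant and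
the second-price auction is efficient. -/
theorem stmt_4 {n : ℕ} (hn : 2 ≤ n) (v : Fin n → ℝ) (hv : ∀ j, 0 ≤ v j) :
    (∀ i : Fin n, ∀ bhat : Fin n → ℝ, (∀ j, 0 ≤ bhat j) → bhat i ≠ v i →
      ∀ x1 p1 x2 p2 : Fin n → ℝ,
        spa hn (Function.update bhat i (v i)) x1 p1 → spa hn bhat x2 p2 →
        v i * x2 i - p2 i ≤ v i * x1 i - p1 i) ∧
    (∀ x p : Fin n → ℝ, spa hn v x p → ∀ i : Fin n, x i = 1 → v i = maxB hn v) := by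
  constructor
  · intro i bhat _ _ x1 p1 x2 p2 h1 h2
    obtain ⟨i1, hb1, hx1, hp1, ho1⟩ := h1
    obtain ⟨i2, hb2, hx2, hp2, ho2⟩ := h2
    set b' := Function.update bhat i (v i) with hb'
    have hmo : maxOthers hn b' i = maxOthers hn bhat i := maxOthers_update hn bhat i (v i)
    -- payoff under truthful deviation
    have key1 : 0 ≤ v i * x1 i - p1 i ∧
        (i1 = i → v i * x1 i - p1 i = v i - maxOthers hn bhat i) := by
      by_cases h : i1 = i
      · subst h
        have hbi : b' i1 = v i1 := Function.update_self _ _ _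
        have : maxOthers hn b' i1 ≤ maxB hn b' := maxOthers_le_maxB hn b' i1
        constructor
        · rw [hx1, hp1, mul_one]
          have := hmo ▸ this
          rw [hmo]
          linarith [hb1 ▸ hbi]
        · intro _; rw [hx1, hp1, hmo, mul_one]
      · obtain ⟨hxi, hpi⟩ := ho1 i (fun hh => h hh.symm)
        refine ⟨by rw [hxi, hpi]; simp, fun hh => absurd hh h⟩
    by_cases h2i : i2 = i
    · subst h2i
      rw [hx2, hp2, mul_one]
      by_cases h1i : i1 = i2
      · rw [key1.2 h1i]
      · -- i wins with bhat but loses with truthful bid: v i ≤ maxOthers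
        have hvle : v i2 ≤ maxOthers hn bhat i2 := by
          have h1 : b' i1 = bhat i1 := Function.update_of_ne h1i _ _
          have h2 : bhat i1 ≤ maxOthers hn bhat i2 := le_maxOthers hn bhat h1i
          have h3 : b' i2 ≤ maxB hn b' := le_maxB hn b' i2
          have h4 : b' i2 = v i2 := Function.update_self _ _ _
          calc v i2 = b' i2 := h4.symm
            _ ≤ maxB hn b' := h3
            _ = b' i1 := hb1.symm
            _ = bhat i1 := h1
            _ ≤ maxOthers hn bhat i2 := h2
        linarith [key1.1]
    · obtain ⟨hxi, hpi⟩ := ho2 i (fun hh => h2i hh.symm)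
      rw [hxi, hpi]
      simpa using key1.1
  · intro x p hspa i hxi
    obtain ⟨i0, hb0, hx0, _, ho⟩ := hspa
    by_cases h : i = i0
    · rw [h]; exact hb0
    · exact absurd hxi (by rw [(ho i h).1]; norm_num)
end
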